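/- Let G be any real n×n matrix satisfying GW = 0 and GZ̃ = Z̃. Under homoskedasticity, E[xᵀGx] = ‖ℓ̃‖² + tr(G)·σ²_ν and E[yᵀGx] = β·(‖ℓ̃‖² + tr(G)·σ²_ν) + tr(G)·σ_{εν}. Consequently, if ‖ℓ̃‖² + tr(G)·σ²_ν ≠ 0, then the ratio-of-expectations bias satisfies E[yᵀGx]/E[xᵀGx] − β = tr(G)·σ_{εν} / (‖ℓ̃‖² + tr(G)·σ²_ν). -/

import Mathlib

open MeasureTheory Matrix BigOperators


private lemma intMul {Ω : Type*} [MeasurableSpace Ω] {μ : Measure Ω} {f g : Ω → ℝ}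
    (hf : MemLp f 2 μ) (hg : MemLp g 2 μ) :
    Integrable (fun ω => f ω * g ω) μ := by
  have h : Integrable (f * g) μ := hf.integrable_mul hg
  exact h

private lemma dot_expand {n : ℕ} (u v : Fin n → ℝ) (G : Matrix (Fin n) (Fin n) ℝ) :
    u ⬝ᵥ (G *ᵥ v) = ∑ i, ∑ j, G i j * (u i * v j) := by
  simp only [dotProduct, mulVec, Finset.mul_sum]
  exact Finset.sum_congr rfl fun i _ => Finset.sum_congr rfl fun j _ => by ring

/-- For any `G` with `G * W = 0` and `G * Z̃ = Z̃`, under homoskedasticity,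
`E[xᵀGx] = ‖ℓ̃‖² + tr(G)·σ²_ν`, `E[yᵀGx] = β·(‖ℓ̃‖² + tr(G)·σ²_ν) + tr(G)·σ_{εν}`, and hence
if `‖ℓ̃‖² + tr(G)·σ²_ν ≠ 0`, the ratio-of-expectations bias is
`tr(G)·σ_{εν} / (‖ℓ̃‖² + tr(G)·σ²_ν)`. -/
theorem stmt0
    {Ω : Type*} [MeasurableSpace Ω] (μ : Measure Ω) [IsProbabilityMeasure μ]
    (n K L : ℕ) (hn : 1 ≤ n) (hK : 1 ≤ K) (hL : 1 ≤ L)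
    (W : Matrix (Fin n) (Fin L) ℝ) (Z : Matrix (Fin n) (Fin K) ℝ)
    (hWrank : W.rank = L) (hZrank : Z.rank = K) (hWZ : Wᵀ * Z = 0)
    (ε ν : Ω → Fin n → ℝ)
    (hmeas : ∀ i, Measurable (fun ω => (ε ω i, ν ω i)))
    (hindep : ProbabilityTheory.iIndepFun
      (fun i ω => (ε ω i, ν ω i)) μ)
    (hεL2 : ∀ i, MemLp (fun ω => ε ω i) 2 μ)
    (hνL2 : ∀ i, MemLp (fun ω => ν ω i) 2 μ)
    (α : Fin L → ℝ) (π : Fin K → ℝ) (δ : Fin L → ℝ) (β : ℝ)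
    (hνmean : ∀ i, ∫ ω, ν ω i ∂μ = 0)
    (hεmean : ∀ i, ∫ ω, ε ω i ∂μ = W i ⬝ᵥ α)
    (σνsq σεν : ℝ)
    -- homoskedasticity: `Var(ν_i) = σ²_ν` and `Cov(ε_i, ν_i) = σ_{εν}` for every `i`
    -- (since `E[ν_i] = 0`, these are `E[ν_i²]` and `E[ε_i ν_i]`)
    (hhomν : ∀ i, ∫ ω, (ν ω i) ^ 2 ∂μ = σνsq)
    (hhomεν : ∀ i, ∫ ω, ε ω i * ν ω i ∂μ = σεν)
    (x y : Ω → Fin n → ℝ) (ℓ : Fin n → ℝ)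
    (hx : ∀ ω, x ω = Z *ᵥ π + W *ᵥ δ + ν ω)
    (hℓ : ℓ = Z *ᵥ π)
    (hy : ∀ ω, y ω = β • x ω + ε ω)
    (G : Matrix (Fin n) (Fin n) ℝ)
    (hGW : G * W = 0) (hGZ : G * Z = Z) :
    (∫ ω, x ω ⬝ᵥ (G *ᵥ x ω) ∂μ = ℓ ⬝ᵥ ℓ + G.trace * σνsq) ∧
    (∫ ω, y ω ⬝ᵥ (G *ᵥ x ω) ∂μ
      = β * (ℓ ⬝ᵥ ℓ + G.trace * σνsq) + G.trace * σεν) ∧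
    (ℓ ⬝ᵥ ℓ + G.trace * σνsq ≠ 0 →
      (∫ ω, y ω ⬝ᵥ (G *ᵥ x ω) ∂μ) / (∫ ω, x ω ⬝ᵥ (G *ᵥ x ω) ∂μ) - β
        = G.trace * σεν / (ℓ ⬝ᵥ ℓ + G.trace * σνsq)) := by
  set m : Fin n → ℝ := Z *ᵥ π + W *ᵥ δ with hm
  -- x coordinates
  have hxi : ∀ ω i, x ω i = m i + ν ω i := by
    intro ω i; rw [hx ω]; simp [hm]
  have hxL2 : ∀ i, MemLp (fun ω => x ω i) 2 μ := by
    intro i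
    have : (fun ω => x ω i) = fun ω => m i + ν ω i := funext fun ω => hxi ω i
    rw [this]; exact MemLp.add (f := fun _ => m i) (memLp_const (m i)) (hνL2 i)
  -- second moments of ν
  have hνν : ∀ i j, ∫ ω, ν ω i * ν ω j ∂μ = if i = j then σνsq else 0 := by
    intro i j
    by_cases h : i = j
    · subst h; rw [if_pos rfl, ← hhomν i]
      congr 1; funext ω; ring
    · rw [if_neg h]
      have hind : ProbabilityTheory.IndepFun (fun ω => ν ω i) (fun ω => ν ω j) μ :=
        (hindep.indepFun h).comp measurable_snd measurable_snd
      rw [ProbabilityTheory.IndepFun.integral_fun_mul_eq_mul_integral hind (hνL2 i).aestronglyMeasurable (hνL2 j).aestronglyMeasurable,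
        hνmean i, zero_mul]
  have hεν : ∀ i j, ∫ ω, ε ω i * ν ω j ∂μ = if i = j then σεν else 0 := by
    intro i j
    by_cases h : i = j
    · subst h; rw [if_pos rfl, hhomεν i]
    · rw [if_neg h]
      have hind : ProbabilityTheory.IndepFun (fun ω => ε ω i) (fun ω => ν ω j) μ :=
        (hindep.indepFun h).comp measurable_fst measurable_snd
      rw [ProbabilityTheory.IndepFun.integral_fun_mul_eq_mul_integral hind (hεL2 i).aestronglyMeasurable (hνL2 j).aestronglyMeasurable,
        hνmean j, mul_zero]
  -- per-entry expectations
  have hxx : ∀ i j, ∫ ω, x ω i * x ω j ∂μ = m i * m j + (if i = j then σνsq else 0) := by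
    intro i j
    have heq : (fun ω => x ω i * x ω j)
        = fun ω => m i * m j + m i * ν ω j + ν ω i * m j + ν ω i * ν ω j := by
      funext ω; rw [hxi ω i, hxi ω j]; ring
    have hA : Integrable (fun _ : Ω => m i * m j) μ := integrable_const _
    have hB : Integrable (fun ω => m i * ν ω j) μ :=
      ((hνL2 j).integrable one_le_two).const_mul _
    have hC : Integrable (fun ω => ν ω i * m j) μ :=
      ((hνL2 i).integrable one_le_two).mul_const _
    have hD : Integrable (fun ω => ν ω i * ν ω j) μ := intMul (hνL2 i) (hνL2 j)
    have hAB : Integrable (fun ω => m i * m j + m i * ν ω j) μ := hA.add hB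
    have hABC : Integrable (fun ω => m i * m j + m i * ν ω j + ν ω i * m j) μ := hAB.add hC
    rw [heq, integral_add hABC hD, integral_add hAB hC,
      integral_add hA hB, integral_const, integral_const_mul, integral_mul_const,
      hνmean i, hνmean j, hνν i j]
    simp
  have hεx : ∀ i j, ∫ ω, ε ω i * x ω j ∂μ
      = (W *ᵥ α) i * m j + (if i = j then σεν else 0) := by
    intro i j
    have heq : (fun ω => ε ω i * x ω j) = fun ω => ε ω i * m j + ε ω i * ν ω j := by
      funext ω; rw [hxi ω j]; ring
    have hA : Integrable (fun ω => ε ω i * m j) μ :=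
      ((hεL2 i).integrable one_le_two).mul_const _
    have hB : Integrable (fun ω => ε ω i * ν ω j) μ := intMul (hεL2 i) (hνL2 j)
    rw [heq, integral_add hA hB, integral_mul_const, hεmean i, hεν i j]
    rfl
  -- algebraic facts
  have hGm : G *ᵥ m = Z *ᵥ π := by
    rw [hm, mulVec_add, mulVec_mulVec, mulVec_mulVec, hGZ, hGW, zero_mulVec, add_zero]
  have hWdot : ∀ v : Fin L → ℝ, (W *ᵥ v) ⬝ᵥ (Z *ᵥ π) = 0 := by
    intro v
    rw [dotProduct_comm, dotProduct_mulVec, ← Matrix.mulVec_transpose,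
      mulVec_mulVec, hWZ, zero_mulVec, zero_dotProduct]
  have hmGm : m ⬝ᵥ (G *ᵥ m) = ℓ ⬝ᵥ ℓ := by
    rw [hGm, hℓ, hm, add_dotProduct, hWdot δ, add_zero]
  have hWαGm : (W *ᵥ α) ⬝ᵥ (G *ᵥ m) = 0 := by rw [hGm, hWdot α]
  -- trace sum
  have htr : ∀ c : ℝ, (∑ i, ∑ j, G i j * (if i = j then c else 0)) = G.trace * c := by
    intro c
    have : ∀ i : Fin n, (∑ j, G i j * (if i = j then c else 0)) = G i i * c := by
      intro i
      rw [Finset.sum_eq_single i]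
      · simp
      · intro j _ hji; simp [Ne.symm hji]
      · simp
    rw [Finset.sum_congr rfl fun i _ => this i, Matrix.trace, ← Finset.sum_mul]
    rfl
  -- first statement
  have hexp1 : ∀ ω, x ω ⬝ᵥ (G *ᵥ x ω) = ∑ i, ∑ j, G i j * (x ω i * x ω j) :=
    fun ω => dot_expand _ _ _
  have h1 : ∫ ω, x ω ⬝ᵥ (G *ᵥ x ω) ∂μ = ℓ ⬝ᵥ ℓ + G.trace * σνsq := by
    calc ∫ ω, x ω ⬝ᵥ (G *ᵥ x ω) ∂μ
        = ∫ ω, ∑ i, ∑ j, G i j * (x ω i * x ω j) ∂μ := by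
          exact integral_congr_ae (Filter.Eventually.of_forall hexp1)
      _ = ∑ i, ∑ j, ∫ ω, G i j * (x ω i * x ω j) ∂μ := by
          refine (integral_finset_sum _ fun i _ => integrable_finset_sum _ fun j _ =>
            (intMul (hxL2 i) (hxL2 j)).const_mul _).trans ?_
          exact Finset.sum_congr rfl fun i _ => integral_finset_sum _ fun j _ =>
            (intMul (hxL2 i) (hxL2 j)).const_mul _
      _ = ∑ i, ∑ j, G i j * (m i * m j + (if i = j then σνsq else 0)) := by
          exact Finset.sum_congr rfl fun i _ => Finset.sum_congr rfl fun j _ => by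
            rw [integral_const_mul, hxx i j]
      _ = (∑ i, ∑ j, G i j * (m i * m j)) + ∑ i, ∑ j, G i j * (if i = j then σνsq else 0) := by
          rw [← Finset.sum_add_distrib]
          exact Finset.sum_congr rfl fun i _ => by
            rw [← Finset.sum_add_distrib]
            exact Finset.sum_congr rfl fun j _ => by ring
      _ = ℓ ⬝ᵥ ℓ + G.trace * σνsq := by
          rw [← dot_expand, hmGm, htr]
  -- second statement
  have hεGx : ∫ ω, ε ω ⬝ᵥ (G *ᵥ x ω) ∂μ = G.trace * σεν := by
    calc ∫ ω, ε ω ⬝ᵥ (G *ᵥ x ω) ∂μ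
        = ∫ ω, ∑ i, ∑ j, G i j * (ε ω i * x ω j) ∂μ := by
          exact integral_congr_ae (Filter.Eventually.of_forall fun ω => dot_expand _ _ _)
      _ = ∑ i, ∑ j, ∫ ω, G i j * (ε ω i * x ω j) ∂μ := by
          refine (integral_finset_sum _ fun i _ => integrable_finset_sum _ fun j _ =>
            (intMul (hεL2 i) (hxL2 j)).const_mul _).trans ?_
          exact Finset.sum_congr rfl fun i _ => integral_finset_sum _ fun j _ =>
            (intMul (hεL2 i) (hxL2 j)).const_mul _
      _ = ∑ i, ∑ j, G i j * ((W *ᵥ α) i * m j + (if i = j then σεν else 0)) := by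
          exact Finset.sum_congr rfl fun i _ => Finset.sum_congr rfl fun j _ => by
            rw [integral_const_mul, hεx i j]
      _ = (∑ i, ∑ j, G i j * ((W *ᵥ α) i * m j))
            + ∑ i, ∑ j, G i j * (if i = j then σεν else 0) := by
          rw [← Finset.sum_add_distrib]
          exact Finset.sum_congr rfl fun i _ => by
            rw [← Finset.sum_add_distrib]
            exact Finset.sum_congr rfl fun j _ => by ring
      _ = G.trace * σεν := by
          rw [← dot_expand, hWαGm, htr, zero_add]
  have h2 : ∫ ω, y ω ⬝ᵥ (G *ᵥ x ω) ∂μ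
      = β * (ℓ ⬝ᵥ ℓ + G.trace * σνsq) + G.trace * σεν := by
    have heq : (fun ω => y ω ⬝ᵥ (G *ᵥ x ω))
        = fun ω => β * (x ω ⬝ᵥ (G *ᵥ x ω)) + ε ω ⬝ᵥ (G *ᵥ x ω) := by
      funext ω
      rw [hy ω, add_dotProduct, smul_dotProduct, smul_eq_mul]
    have hintxx : Integrable (fun ω => x ω ⬝ᵥ (G *ᵥ x ω)) μ := by
      rw [funext hexp1]
      exact integrable_finset_sum _ fun i _ => integrable_finset_sum _ fun j _ =>
        (intMul (hxL2 i) (hxL2 j)).const_mul _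
    have hintεx : Integrable (fun ω => ε ω ⬝ᵥ (G *ᵥ x ω)) μ := by
      rw [funext (fun ω => dot_expand (ε ω) (x ω) G)]
      exact integrable_finset_sum _ fun i _ => integrable_finset_sum _ fun j _ =>
        (intMul (hεL2 i) (hxL2 j)).const_mul _
    rw [heq, integral_add (hintxx.const_mul β) hintεx, integral_const_mul, h1, hεGx]
  refine ⟨h1, h2, fun hS => ?_⟩
  rw [h1, h2]
  field_simp
  ring
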